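/- Fix a partial assembly A of an n×n puzzle with q jig types and let E denote the number of edges of its contour graph C(A). If no two of the piece-sides lying across edges of C(A) are coincident in the planted assembly, then the probability (over the uniformly random carving ω) that A is feasible equals q^{−E}. -/

import Mathlib

open Finset Filter

noncomputable section

/-- A piece of the `n × n` puzzle, identified with its cell in the original grid. -/
abbrev Cell (n : ℕ) := Fin n × Fin n

/-- The unit vector in direction `d` (`0` = right, `1` = up, `2` = left, `3` = down). -/
def dirVec (d : ZMod 4) : ℤ × ℤ :=
  if d = 0 then (1, 0) else if d = 1 then (0, 1) else if d = 2 then (-1, 0) else (0, -1)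

/-- The integer coordinates of a cell. -/
def cellZ {n : ℕ} (c : Cell n) : ℤ × ℤ := ((c.1 : ℤ), (c.2 : ℤ))

/-- A carving assigns a jig type (one of `q` possibilities) to each of the four
(cyclically ordered) sides of each of the `n²` pieces. -/
abbrev Carving (n q : ℕ) := Cell n → ZMod 4 → Fin q

/-- A carving is valid if each pair of coincident sides of adjacent pieces of the
original grid receives complementary jig types (`ι` is the complementation involution). -/
def IsValidCarving {n q : ℕ} (ι : Fin q → Fin q) (ω : Carving n q) : Prop :=
  ∀ p p' : Cell n, ∀ d : ZMod 4,
    cellZ p' = cellZ p + dirVec d → ω p' (d + 2) = ι (ω p d)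

open scoped Classical in
/-- The probability of the event `P` for a carving chosen uniformly at random among
all valid carvings. -/
def puzzleProb {n q : ℕ} (ι : Fin q → Fin q) (P : Carving n q → Prop) : ℝ :=
  ((Finset.univ.filter fun ω : Carving n q => IsValidCarving ι ω ∧ P ω).card : ℝ) /
  ((Finset.univ.filter fun ω : Carving n q => IsValidCarving ι ω).card : ℝ)

/-- A complete assembly: a bijective placement of the pieces onto the cells of the
`n × n` grid together with an orientation (`ℤ/4`) for each piece. -/
structure Assembly (n : ℕ) where
  pos : Equiv.Perm (Cell n)
  rot : Cell n → ZMod 4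

/-- The planted assembly keeps every piece in its original position and orientation. -/
def planted (n : ℕ) : Assembly n := ⟨Equiv.refl _, fun _ => 0⟩

/-- A complete assembly is feasible for the carving `ω` if all pairs of abutting sides
carry complementary jig types.  The side of piece `p` facing direction `d` after `p` is
rotated by `A.rot p` quarter turns is its original side `d - A.rot p`. -/
def Assembly.Feasible {n q : ℕ} (ι : Fin q → Fin q) (A : Assembly n) (ω : Carving n q) :
    Prop :=
  ∀ p p' : Cell n, ∀ d : ZMod 4,
    cellZ (A.pos p') = cellZ (A.pos p) + dirVec d →
    ω p' (d + 2 - A.rot p') = ι (ω p (d - A.rot p))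

/-- The carving of the grid obtained by reassembling the pieces according to `A`:
side `d` of the grid cell `c` receives the jig type of the corresponding side of the
piece placed on `c`. -/
def Assembly.carving {n q : ℕ} (A : Assembly n) (ω : Carving n q) : Carving n q :=
  fun c d => ω (A.pos.symm c) (d - A.rot (A.pos.symm c))

/-- Rotation of the grid by 90 degrees. -/
def rotCell {n : ℕ} : Equiv.Perm (Cell n) where
  toFun c := (c.2.rev, c.1)
  invFun c := (c.2, c.1.rev)
  left_inv c := by simp
  right_inv c := by simp

/-- Global rotation of a carving of the grid by 90 degrees. -/
def rotateCarving {n q : ℕ} (ω : Carving n q) : Carving n q :=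
  fun c d => ω (rotCell.symm c) (d - 1)

/-- Two solutions are similar if they differ only by a global rotation of the puzzle,
a permutation of pieces with identical carvings, and rotations of pieces whose carving
is rotation-invariant; equivalently, if they induce the same carving of the grid up to
a global rotation. -/
def PuzzleSimilar {n q : ℕ} (A B : Assembly n) (ω : Carving n q) : Prop :=
  ∃ r : Fin 4, B.carving ω = rotateCarving^[r.val] (A.carving ω)

/-- The planted assembly rotated globally by `r` quarter turns. -/
def rotatedPlanted (n : ℕ) (r : Fin 4) : Assembly n :=
  ⟨rotCell ^ r.val, fun _ => (r.val : ZMod 4)⟩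

/-- The cell `c` belongs to the `k × k` window with lower-left corner `(a, b)`. -/
def inWindow {n : ℕ} (a b k : ℕ) (c : Cell n) : Prop :=
  a ≤ c.1.val ∧ c.1.val < a + k ∧ b ≤ c.2.val ∧ c.2.val < b + k

open scoped Classical in
/-- The number of dual edges of the `k × k` window at `(a, b)` (each dual edge recorded
once, as `(c, c', d)` with `d ∈ {right, up}`) whose abutting jig types, for the carving
induced by the assembly `A`, form the complementary pair `{j, ι j}`. -/
def windowTypeCount {n q : ℕ} (ι : Fin q → Fin q) (A : Assembly n) (ω : Carving n q)
    (a b k : ℕ) (j : Fin q) : ℕ :=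
  (Finset.univ.filter fun x : Cell n × Cell n × Fin 2 =>
    inWindow a b k x.1 ∧ inWindow a b k x.2.1 ∧
    cellZ x.2.1 = cellZ x.1 + dirVec (x.2.2.val : ZMod 4) ∧
    (A.carving ω x.1 (x.2.2.val : ZMod 4) = j ∨
      A.carving ω x.1 (x.2.2.val : ZMod 4) = ι j)).card

open scoped Classical in
/-- The shape multiplicity of the `k × k` window at `(a, b)`: the sum, over unordered
complementary pairs `J = {j, ι j}`, of `⌊(number of dual edges of the window of type J)/2⌋`. -/
def windowSM {n q : ℕ} (ι : Fin q → Fin q) (A : Assembly n) (ω : Carving n q)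
    (a b k : ℕ) : ℕ :=
  ∑ j ∈ Finset.univ.filter (fun j : Fin q => j ≤ ι j),
    windowTypeCount ι A ω a b k j / 2

/-- A feasible complete assembly is `k`-good if every `k × k` window touching the boundary
of the puzzle has shape multiplicity at most `1`, and every other `k × k` window has shape
multiplicity at most `2`. -/
def KGood {n q : ℕ} (ι : Fin q → Fin q) (A : Assembly n) (ω : Carving n q) (k : ℕ) :
    Prop :=
  A.Feasible ι ω ∧
    ∀ a b : ℕ, a + k ≤ n → b + k ≤ n →
      windowSM ι A ω a b k ≤ 2 ∧
      ((a = 0 ∨ b = 0 ∨ a + k = n ∨ b + k = n) → windowSM ι A ω a b k ≤ 1)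

/-- A partial assembly: an injective placement of a subset of the pieces into the square
grid `ℤ²`, together with an orientation for each placed piece. -/
structure PartialAssembly (n : ℕ) where
  pieces : Finset (Cell n)
  pos : Cell n → ℤ × ℤ
  rot : Cell n → ZMod 4
  pos_inj : ∀ p ∈ pieces, ∀ p' ∈ pieces, pos p = pos p' → p = p'

/-- A partial assembly is feasible for `ω` if all pairs of abutting sides carry
complementary jig types. -/
def PartialAssembly.Feasible {n q : ℕ} (ι : Fin q → Fin q) (A : PartialAssembly n)
    (ω : Carving n q) : Prop :=
  ∀ p ∈ A.pieces, ∀ p' ∈ A.pieces, ∀ d : ZMod 4,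
    A.pos p' = A.pos p + dirVec d →
    ω p' (d + 2 - A.rot p') = ι (ω p (d - A.rot p))

open scoped Classical in
/-- The edges of the contour graph `C(A)`: the dual edges of `A` (each recorded once, as
`(p, p', d)` with `d ∈ {right, up}`, `p'` being placed in direction `d` from `p`) whose two
abutting piece sides are not coincident in the planted assembly. -/
def contourEdges {n : ℕ} (A : PartialAssembly n) : Finset (Cell n × Cell n × Fin 2) :=
  Finset.univ.filter fun x =>
    x.1 ∈ A.pieces ∧ x.2.1 ∈ A.pieces ∧
    A.pos x.2.1 = A.pos x.1 + dirVec (x.2.2.val : ZMod 4) ∧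
    ¬ (A.rot x.2.1 = A.rot x.1 ∧
        cellZ x.2.1 = cellZ x.1 + dirVec ((x.2.2.val : ZMod 4) - A.rot x.1))

/-- The piece sides lying across the edges of the contour graph of `A`. -/
def crossingSides {n : ℕ} (A : PartialAssembly n) : Set (Cell n × ZMod 4) :=
  {ps | ∃ x ∈ contourEdges A,
    ps = (x.1, (x.2.2.val : ZMod 4) - A.rot x.1) ∨
    ps = (x.2.1, (x.2.2.val : ZMod 4) + 2 - A.rot x.2.1)}

/-- Two piece sides are coincident in the planted assembly. -/
def CoincidentPlanted {n : ℕ} (ps ps' : Cell n × ZMod 4) : Prop :=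
  cellZ ps'.1 = cellZ ps.1 + dirVec ps.2 ∧ ps'.2 = ps.2 + 2

open scoped Classical in
/-- The shape multiplicity `sm(C(A), ω)` of the contour graph of `A` with respect to `ω`:
the sum, over unordered complementary pairs `J = {j, ι j}`, of
`⌊(number of contour edges of type J)/2⌋`. -/
def contourSM {n q : ℕ} (ι : Fin q → Fin q) (A : PartialAssembly n) (ω : Carving n q) :
    ℕ :=
  ∑ j ∈ Finset.univ.filter (fun j : Fin q => j ≤ ι j),
    ((contourEdges A).filter fun x =>
      ω x.1 ((x.2.2.val : ZMod 4) - A.rot x.1) = j ∨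
      ω x.1 ((x.2.2.val : ZMod 4) - A.rot x.1) = ι j).card / 2

end


namespace Statement9Aux

open scoped Classical

open scoped Classical

/-- Generic counting equivalence: functions satisfying one constraint per edge. -/
noncomputable def constraintEquiv {α β γ : Type*} (T : Finset γ) (a b : γ → α) (g : γ → β → β)
    (ha : ∀ x ∈ T, ∀ y ∈ T, a x = a y → x = y)
    (hab : ∀ x ∈ T, ∀ y ∈ T, a x ≠ b y) :
    {f : α → β // ∀ x ∈ T, f (a x) = g x (f (b x))} ≃ ({s : α // s ∉ T.image a} → β) := by
  classical
  have huniq : ∀ s ∈ T.image a, ∃! x, x ∈ T ∧ a x = s := by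
    intro s hs
    obtain ⟨x, hx, rfl⟩ := Finset.mem_image.1 hs
    exact ⟨x, ⟨hx, rfl⟩, fun y ⟨hy, hay⟩ => ha y hy x hx hay⟩
  let xof : ∀ s ∈ T.image a, γ := fun s hs => T.choose (fun x => a x = s) (huniq s hs)
  have hxofT : ∀ s hs, xof s hs ∈ T := fun s hs => T.choose_mem _ _
  have hxofa : ∀ s hs, a (xof s hs) = s := fun s hs => T.choose_property (fun x => a x = s) (huniq s hs)
  have hbnot : ∀ x ∈ T, b x ∉ T.image a := by
    intro x hx h
    obtain ⟨y, hy, hay⟩ := Finset.mem_image.1 h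
    exact hab y hy x hx hay
  refine
    { toFun := fun F s => F.1 s.1
      invFun := fun h =>
        ⟨fun s => if hs : s ∈ T.image a then g (xof s hs) (h ⟨b (xof s hs), hbnot _ (hxofT s hs)⟩)
          else h ⟨s, hs⟩, ?_⟩
      left_inv := ?_
      right_inv := ?_ }
  · intro x hx
    have hax : a x ∈ T.image a := Finset.mem_image_of_mem a hx
    dsimp only
    rw [dif_pos hax, dif_neg (hbnot x hx)]
    have hxx : xof (a x) hax = x := ha _ (hxofT _ hax) x hx (hxofa _ hax)
    have key : ∀ (y : γ) (hby : b y ∉ T.image a), y = x →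
        g y (h ⟨b y, hby⟩) = g x (h ⟨b x, hbnot x hx⟩) := by
      rintro y hby rfl; rfl
    exact key _ _ hxx
  · rintro ⟨F, hF⟩
    apply Subtype.ext
    funext s
    dsimp only
    by_cases hs : s ∈ T.image a
    · rw [dif_pos hs]
      have := hF (xof s hs) (hxofT s hs)
      rw [hxofa s hs] at this
      exact this.symm
    · rw [dif_neg hs]
  · intro h
    funext s
    obtain ⟨s, hs⟩ := s
    exact dif_neg hs


variable {n q : ℕ}

/-- A side of a piece. -/
abbrev Side (n : ℕ) := Cell n × ZMod 4

lemma cellZ_inj : Function.Injective (cellZ (n := n)) := by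
  rintro ⟨a, b⟩ ⟨c, d⟩ h
  simp only [cellZ, Prod.mk.injEq, Int.natCast_inj] at h
  exact Prod.ext (Fin.ext (by exact_mod_cast h.1)) (Fin.ext (by exact_mod_cast h.2))

lemma dirVec_add_two (d : ZMod 4) : dirVec (d + 2) = -dirVec d := by revert d; decide

lemma zmod4_sub_two (d : ZMod 4) : d - 2 = d + 2 := by revert d; decide

/-- A side is dependent if it points in direction `2` or `3` and has a planted neighbour
across it. -/
def Dep (s : Side n) : Prop :=
  (s.2 = 2 ∨ s.2 = 3) ∧ ∃ p' : Cell n, cellZ p' = cellZ s.1 + dirVec s.2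

/-- The representative of the coincidence class of a side. -/
noncomputable def rep (s : Side n) : Side n :=
  if h : Dep s then (h.2.choose, s.2 - 2) else s

lemma rep_not_dep (s : Side n) : ¬ Dep (rep s) := by
  by_cases h : Dep s
  · rw [rep, dif_pos h]
    rintro ⟨h2, -⟩
    exact (by decide : ∀ e : ZMod 4, (e = 2 ∨ e = 3) → ¬(e - 2 = 2 ∨ e - 2 = 3)) s.2 h.1 h2
  · rwa [rep, dif_neg h]

lemma rep_coincident {s : Side n} (h : Dep s) : CoincidentPlanted s (rep s) := by
  rw [rep, dif_pos h]
  exact ⟨h.2.choose_spec, zmod4_sub_two s.2⟩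

lemma rep_eq_of_not_dep {s : Side n} (h : ¬ Dep s) : rep s = s := dif_neg h

lemma valid_iff (ι : Fin q → Fin q) (hι : ι ∘ ι = id) (ω : Carving n q) :
    IsValidCarving ι ω ↔
      ∀ s : Side n, ∀ h : Dep s, ω s.1 s.2 = ι (ω (rep s).1 (rep s).2) := by
  have hιι : ∀ a, ι (ι a) = a := fun a => congrFun hι a
  constructor
  · intro hv s h
    rw [rep, dif_pos h]
    have hspec := h.2.choose_spec
    have hnb : cellZ s.1 = cellZ h.2.choose + dirVec (s.2 - 2) := by
      rw [zmod4_sub_two, dirVec_add_two, hspec]; ring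
    have := hv h.2.choose s.1 (s.2 - 2) hnb
    rwa [sub_add_cancel] at this
  · intro hd p p' d hpp
    have main : ∀ (p p' : Cell n) (e : ZMod 4), (e = 0 ∨ e = 1) →
        cellZ p' = cellZ p + dirVec e → ω p' (e + 2) = ι (ω p e) := by
      intro p p' e he hpp
      have hdep : Dep ((p', e + 2) : Side n) :=
        ⟨by rcases he with rfl | rfl <;> dsimp only <;> decide, p,
          by dsimp only; rw [dirVec_add_two, hpp]; ring⟩
      have h := hd (p', e + 2) hdep
      rw [rep, dif_pos hdep] at h
      have hch : hdep.2.choose = p := cellZ_inj (by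
        have := hdep.2.choose_spec
        dsimp only at this
        rw [this, dirVec_add_two, hpp]; ring)
      dsimp only at h
      rwa [hch, add_sub_cancel_right] at h
    rcases (by decide : ∀ e : ZMod 4, e = 0 ∨ e = 1 ∨ e = 2 ∨ e = 3) d with rfl | h | h | h
    · exact main p p' 0 (Or.inl rfl) hpp
    · subst h; exact main p p' 1 (Or.inr rfl) hpp
    · subst h
      have h2 := main p' p 0 (Or.inl rfl)
        (by rw [hpp, show dirVec 0 = -dirVec 2 from by decide]; ring)
      rw [show (0 : ZMod 4) + 2 = 2 from by decide] at h2
      rw [show (2 : ZMod 4) + 2 = 0 from by decide, h2, hιι]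
    · subst h
      have h2 := main p' p 1 (Or.inr rfl)
        (by rw [hpp, show dirVec 1 = -dirVec 3 from by decide]; ring)
      rw [show (1 : ZMod 4) + 2 = 3 from by decide] at h2
      rw [show (3 : ZMod 4) + 2 = 1 from by decide, h2, hιι]


variable (ι : Fin q → Fin q)

/-- The free sides. -/
abbrev FreeSide (n : ℕ) := {s : Side n // ¬ Dep s}

/-- Extension of an assignment on free sides to a valid carving. -/
noncomputable def ext (f : FreeSide n → Fin q) : Carving n q := fun p d =>
  if h : Dep ((p, d) : Side n) then ι (f ⟨rep (p, d), rep_not_dep _⟩)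
  else f ⟨(p, d), h⟩

/-- Restriction of a carving to the free sides. -/
def restrict (ω : Carving n q) : FreeSide n → Fin q := fun s => ω s.1.1 s.1.2

/-- The value of a valid carving at any side, through its representative. -/
noncomputable def valAt (f : FreeSide n → Fin q) (s : Side n) : Fin q :=
  if Dep s then ι (f ⟨rep s, rep_not_dep s⟩) else f ⟨rep s, rep_not_dep s⟩

lemma ext_eq_valAt (f : FreeSide n → Fin q) (s : Side n) :
    ext ι f s.1 s.2 = valAt ι f s := by
  by_cases h : Dep s
  · rw [ext, valAt, if_pos h, dif_pos (show Dep ((s.1, s.2) : Side n) from by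
      rwa [Prod.mk.eta])]
  · rw [ext, valAt, if_neg h, dif_neg (show ¬ Dep ((s.1, s.2) : Side n) from by
      rwa [Prod.mk.eta])]
    exact congrArg f (Subtype.ext (Prod.mk.eta.trans (rep_eq_of_not_dep h).symm))

lemma ext_valid (hι : ι ∘ ι = id) (f : FreeSide n → Fin q) :
    IsValidCarving ι (ext ι f) := by
  rw [valid_iff ι hι]
  intro s h
  rw [ext_eq_valAt, ext_eq_valAt, valAt, if_pos h, valAt, if_neg (rep_not_dep s)]
  exact congrArg (fun t => ι (f t))
    (Subtype.ext (rep_eq_of_not_dep (rep_not_dep s)).symm)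

lemma restrict_ext (f : FreeSide n → Fin q) : restrict (ext ι f) = f := by
  funext s
  obtain ⟨⟨p, d⟩, hs⟩ := s
  rw [restrict, ext]
  exact dif_neg hs

lemma ext_restrict (hι : ι ∘ ι = id) (ω : Carving n q) (hω : IsValidCarving ι ω) :
    ext ι (restrict ω) = ω := by
  funext p d
  rw [ext]
  by_cases h : Dep ((p, d) : Side n)
  · rw [dif_pos h]
    have := (valid_iff ι hι ω).1 hω (p, d) h
    rw [this]
    rfl
  · rw [dif_neg h]
    rfl

/-- Valid carvings are equivalent to assignments on free sides. -/
noncomputable def validEquiv (hι : ι ∘ ι = id) :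
    {ω : Carving n q // IsValidCarving ι ω} ≃ (FreeSide n → Fin q) where
  toFun ω := restrict ω.1
  invFun f := ⟨ext ι f, ext_valid ι hι f⟩
  left_inv ω := Subtype.ext (ext_restrict ι hι ω.1 ω.2)
  right_inv f := restrict_ext ι f

variable (A : PartialAssembly n)

/-- The first crossing side of a contour edge. -/
def s1 (x : Cell n × Cell n × Fin 2) : Side n :=
  (x.1, (x.2.2.val : ZMod 4) - A.rot x.1)

/-- The second crossing side of a contour edge. -/
def s2 (x : Cell n × Cell n × Fin 2) : Side n :=
  (x.2.1, (x.2.2.val : ZMod 4) + 2 - A.rot x.2.1)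

lemma mem_contour_iff (x : Cell n × Cell n × Fin 2) :
    x ∈ contourEdges A ↔ x.1 ∈ A.pieces ∧ x.2.1 ∈ A.pieces ∧
      A.pos x.2.1 = A.pos x.1 + dirVec (x.2.2.val : ZMod 4) ∧
      ¬ (A.rot x.2.1 = A.rot x.1 ∧
          cellZ x.2.1 = cellZ x.1 + dirVec ((x.2.2.val : ZMod 4) - A.rot x.1)) := by
  simp [contourEdges]

lemma s1_mem_crossing {x} (hx : x ∈ contourEdges A) : s1 A x ∈ crossingSides A :=
  ⟨x, hx, Or.inl rfl⟩

lemma s2_mem_crossing {x} (hx : x ∈ contourEdges A) : s2 A x ∈ crossingSides A :=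
  ⟨x, hx, Or.inr rfl⟩

lemma fin2_cast_inj : ∀ a b : Fin 2, ((a.val : ℕ) : ZMod 4) = (b.val : ZMod 4) → a = b := by
  decide

lemma fin2_cast_ne_add_two : ∀ a b : Fin 2,
    ((a.val : ℕ) : ZMod 4) ≠ ((b.val : ℕ) : ZMod 4) + 2 := by decide

lemma s1_inj {x y} (hx : x ∈ contourEdges A) (hy : y ∈ contourEdges A)
    (h : s1 A x = s1 A y) : x = y := by
  rw [mem_contour_iff] at hx hy
  have h1 : x.1 = y.1 := by
    have := congrArg Prod.fst h
    dsimp [s1] at this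
    exact this
  have h2 : ((x.2.2.val : ℕ) : ZMod 4) = (y.2.2.val : ZMod 4) := by
    have := congrArg Prod.snd h
    dsimp [s1] at this
    rw [h1] at this
    exact sub_left_inj.1 this
  have h3 : x.2.2 = y.2.2 := fin2_cast_inj _ _ h2
  have h4 : x.2.1 = y.2.1 := by
    refine A.pos_inj _ hx.2.1 _ hy.2.1 ?_
    rw [hx.2.2.1, hy.2.2.1, h1, h2]
  exact Prod.ext h1 (Prod.ext h4 h3)

lemma s2_inj {x y} (hx : x ∈ contourEdges A) (hy : y ∈ contourEdges A)
    (h : s2 A x = s2 A y) : x = y := by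
  rw [mem_contour_iff] at hx hy
  have h1 : x.2.1 = y.2.1 := by
    have := congrArg Prod.fst h
    dsimp [s2] at this
    exact this
  have h2 : ((x.2.2.val : ℕ) : ZMod 4) = (y.2.2.val : ZMod 4) := by
    have := congrArg Prod.snd h
    dsimp [s2] at this
    rw [h1] at this
    have := sub_left_inj.1 this
    exact add_right_cancel this
  have h3 : x.2.2 = y.2.2 := fin2_cast_inj _ _ h2
  have h4 : x.1 = y.1 := by
    refine A.pos_inj _ hx.1 _ hy.1 ?_
    have ex := hx.2.2.1
    have ey := hy.2.2.1
    rw [h1, h2] at ex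
    rw [ey] at ex
    exact (add_right_cancel ex).symm
  exact Prod.ext h4 (Prod.ext h1 h3)

lemma s1_ne_s2 {x y : Cell n × Cell n × Fin 2} : s1 A x ≠ s2 A y := by
  intro h
  have h1 : x.1 = y.2.1 := by
    have := congrArg Prod.fst h
    dsimp [s1, s2] at this
    exact this
  have h2 := congrArg Prod.snd h
  dsimp [s1, s2] at h2
  rw [h1] at h2
  have h3 : ((x.2.2.val : ℕ) : ZMod 4) = (y.2.2.val : ZMod 4) + 2 := sub_left_inj.1 h2
  exact fin2_cast_ne_add_two _ _ h3

lemma rep_inj_crossing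
    (hcross : ∀ ps ∈ crossingSides A, ∀ ps' ∈ crossingSides A, ¬ CoincidentPlanted ps ps')
    {s t : Side n} (hs : s ∈ crossingSides A) (ht : t ∈ crossingSides A)
    (h : rep s = rep t) : s = t := by
  by_cases hds : Dep s <;> by_cases hdt : Dep t
  · rw [rep, dif_pos hds, rep, dif_pos hdt] at h
    have h2 : s.2 = t.2 := sub_left_inj.1 (congrArg Prod.snd h)
    have h1 : s.1 = t.1 := by
      apply cellZ_inj
      have e1 := hds.2.choose_spec
      have e2 := hdt.2.choose_spec
      have hc : cellZ (hds.2.choose) = cellZ (hdt.2.choose) :=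
        congrArg (fun z => cellZ z.1) h
      rw [e1, e2, h2] at hc
      exact add_right_cancel hc
    exact Prod.ext h1 h2
  · rw [rep_eq_of_not_dep hdt] at h
    have := rep_coincident hds
    rw [h] at this
    exact absurd this (hcross s hs t ht)
  · rw [rep_eq_of_not_dep hds] at h
    have := rep_coincident hdt
    rw [← h] at this
    exact absurd this (hcross t ht s hs)
  · rwa [rep_eq_of_not_dep hds, rep_eq_of_not_dep hdt] at h

lemma feasible_iff (hι : ι ∘ ι = id) (ω : Carving n q) (hω : IsValidCarving ι ω) :
    A.Feasible ι ω ↔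
      ∀ x ∈ contourEdges A, ω (s2 A x).1 (s2 A x).2 = ι (ω (s1 A x).1 (s1 A x).2) := by
  have hιι : ∀ a, ι (ι a) = a := fun a => congrFun hι a
  constructor
  · intro hf x hx
    rw [mem_contour_iff] at hx
    exact hf x.1 hx.1 x.2.1 hx.2.1 _ hx.2.2.1
  · intro hc p hp p' hp' d hd
    have step : ∀ p p' : Cell n, p ∈ A.pieces → p' ∈ A.pieces → ∀ e : Fin 2,
        A.pos p' = A.pos p + dirVec ((e.val : ℕ) : ZMod 4) →
        ω p' ((e.val : ZMod 4) + 2 - A.rot p') = ι (ω p ((e.val : ZMod 4) - A.rot p)) := by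
      intro p p' hp hp' e hpos
      by_cases hco : A.rot p' = A.rot p ∧
          cellZ p' = cellZ p + dirVec (((e.val : ℕ) : ZMod 4) - A.rot p)
      · rw [hco.1, show ((e.val : ℕ) : ZMod 4) + 2 - A.rot p
            = ((e.val : ℕ) : ZMod 4) - A.rot p + 2 from by ring]
        exact hω p p' _ hco.2
      · have hx : ((p, p', e) : Cell n × Cell n × Fin 2) ∈ contourEdges A :=
          (mem_contour_iff A _).2 ⟨hp, hp', hpos, hco⟩
        exact hc _ hx
    have c0 : (((0 : Fin 2).val : ℕ) : ZMod 4) = 0 := by decide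
    have c1 : (((1 : Fin 2).val : ℕ) : ZMod 4) = 1 := by decide
    rcases (by decide : ∀ e : ZMod 4, e = 0 ∨ e = 1 ∨ e = 2 ∨ e = 3) d with rfl | h | h | h
    · have := step p p' hp hp' 0 (by rw [c0]; exact hd)
      rwa [c0] at this
    · subst h
      have := step p p' hp hp' 1 (by rw [c1]; exact hd)
      rwa [c1] at this
    · subst h
      have h2 := step p' p hp' hp 0
        (by rw [c0, hd, show dirVec (0 : ZMod 4) = -dirVec 2 from by decide]; ring)
      rw [c0, show (0 : ZMod 4) + 2 = 2 from by decide] at h2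
      rw [show (2 : ZMod 4) + 2 = 0 from by decide, h2, hιι]
    · subst h
      have h2 := step p' p hp' hp 1
        (by rw [c1, hd, show dirVec (1 : ZMod 4) = -dirVec 3 from by decide]; ring)
      rw [c1, show (1 : ZMod 4) + 2 = 3 from by decide] at h2
      rw [show (3 : ZMod 4) + 2 = 1 from by decide, h2, hιι]

/-- Cardinality version of `constraintEquiv`. -/
lemma constraintCard {α β γ : Type*} [Fintype α] [Fintype β] (T : Finset γ)
    (a b : γ → α) (g : γ → β → β)
    (ha : ∀ x ∈ T, ∀ y ∈ T, a x = a y → x = y)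
    (hab : ∀ x ∈ T, ∀ y ∈ T, a x ≠ b y) :
    Nat.card {f : α → β // ∀ x ∈ T, f (a x) = g x (f (b x))} =
      Nat.card β ^ (Nat.card α - T.card) := by
  classical
  rw [Nat.card_congr (constraintEquiv T a b g ha hab), Nat.card_eq_fintype_card,
    Fintype.card_fun, Nat.card_eq_fintype_card, Nat.card_eq_fintype_card]
  congr 1
  have himg : (T.image a).card = T.card :=
    Finset.card_image_of_injOn (fun x hx y hy => ha x hx y hy)
  rw [← himg, Fintype.card_subtype_compl (p := fun s => s ∈ T.image a)]
  congr 1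
  exact Fintype.card_coe _

/-- The first free side associated with a contour edge. -/
noncomputable def aF (x : Cell n × Cell n × Fin 2) : FreeSide n :=
  ⟨rep (s1 A x), rep_not_dep _⟩

/-- The second free side associated with a contour edge. -/
noncomputable def bF (x : Cell n × Cell n × Fin 2) : FreeSide n :=
  ⟨rep (s2 A x), rep_not_dep _⟩

/-- The constraint map associated with a contour edge. -/
noncomputable def gF (x : Cell n × Cell n × Fin 2) (w : Fin q) : Fin q :=
  (if Dep (s1 A x) then ι else id) (ι ((if Dep (s2 A x) then ι else id) w))

lemma constraint_iff (hι : ι ∘ ι = id) (f : FreeSide n → Fin q)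
    (x : Cell n × Cell n × Fin 2) :
    valAt ι f (s2 A x) = ι (valAt ι f (s1 A x)) ↔
      f (aF A x) = gF ι A x (f (bF A x)) := by
  have hιι : ∀ a, ι (ι a) = a := fun a => congrFun hι a
  have hinj : ∀ a b : Fin q, ι a = ι b → a = b := by
    intro a b h
    rw [← hιι a, h, hιι]
  simp only [valAt, gF, aF, bF]
  by_cases h1 : Dep (s1 A x) <;> by_cases h2 : Dep (s2 A x) <;>
    simp only [h1, h2, if_true, if_false, id_def, hιι]
  · exact eq_comm
  · exact eq_comm
  · exact ⟨fun h => (hinj _ _ h).symm, fun h => by rw [h]⟩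
  · exact ⟨fun h => by rw [h, hιι], fun h => by rw [h, hιι]⟩

end Statement9Aux

open Statement9Aux

set_option maxHeartbeats 1600000

/-- Fix a partial assembly `A` of an `n × n` puzzle with `q` jig types and
let `E` be the number of edges of its contour graph `C(A)`.  If no two of the piece sides
lying across edges of `C(A)` are coincident in the planted assembly, then the probability
(over the uniformly random carving) that `A` is feasible equals `q^{−E}`. -/
theorem statement_9 (n q : ℕ) (hn : 1 ≤ n) (hq : 2 ≤ q)
    (ι : Fin q → Fin q) (hι : ι ∘ ι = id)
    (A : PartialAssembly n)
    (hcross : ∀ ps ∈ crossingSides A, ∀ ps' ∈ crossingSides A,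
      ¬ CoincidentPlanted ps ps') :
    puzzleProb ι (fun ω : Carving n q => A.Feasible ι ω) =
      (q : ℝ) ^ (-((contourEdges A).card : ℤ)) := by
  classical
  set T := contourEdges A with hT
  have ha : ∀ x ∈ T, ∀ y ∈ T, aF A x = aF A y → x = y := by
    intro x hx y hy h
    exact s1_inj A hx hy
      (rep_inj_crossing A hcross (s1_mem_crossing A hx) (s1_mem_crossing A hy)
        (congrArg Subtype.val h))
  have hab : ∀ x ∈ T, ∀ y ∈ T, aF A x ≠ bF A y := by
    intro x hx y hy h
    exact s1_ne_s2 A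
      (rep_inj_crossing A hcross (s1_mem_crossing A hx) (s2_mem_crossing A hy)
        (congrArg Subtype.val h))
  have e2 : {ω : Carving n q // IsValidCarving ι ω ∧ A.Feasible ι ω} ≃
      {f : FreeSide n → Fin q // ∀ x ∈ T, f (aF A x) = gF ι A x (f (bF A x))} :=
    { toFun := fun ω => ⟨restrict ω.1, by
        intro x hx
        rw [← constraint_iff ι A hι]
        have hval : ∀ s : Side n, valAt ι (restrict ω.1) s = ω.1 s.1 s.2 := by
          intro s
          rw [← ext_eq_valAt, ext_restrict ι hι ω.1 ω.2.1]
        rw [hval, hval]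
        exact (feasible_iff ι A hι ω.1 ω.2.1).1 ω.2.2 x hx⟩
      invFun := fun f => ⟨ext ι f.1, ext_valid ι hι f.1, by
        rw [feasible_iff ι A hι _ (ext_valid ι hι f.1)]
        intro x hx
        rw [ext_eq_valAt, ext_eq_valAt]
        exact (constraint_iff ι A hι f.1 x).2 (f.2 x hx)⟩
      left_inv := fun ω => Subtype.ext (ext_restrict ι hι ω.1 ω.2.1)
      right_inv := fun f => Subtype.ext (restrict_ext ι f.1) }
  have cardsub : ∀ (P : Carving n q → Prop) (inst : DecidablePred P),
      (@Finset.filter _ P inst Finset.univ).card = Nat.card {x : Carving n q // P x} := by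
    intro P inst
    calc (@Finset.filter _ P inst Finset.univ).card
        = Nat.card (@Finset.filter _ P inst Finset.univ : Finset (Carving n q)) :=
          (Nat.card_eq_finsetCard _).symm
      _ = Nat.card {x : Carving n q // P x} :=
          Nat.card_congr (Equiv.subtypeEquivRight fun x => by simp)
  set F := Nat.card (FreeSide n) with hF
  have hnum : Nat.card {ω : Carving n q // IsValidCarving ι ω ∧ A.Feasible ι ω}
      = q ^ (F - T.card) := by
    rw [Nat.card_congr e2, constraintCard T _ _ _ ha hab,
      Nat.card_eq_fintype_card (α := Fin q), Fintype.card_fin]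
  have hden : Nat.card {ω : Carving n q // IsValidCarving ι ω} = q ^ F := by
    rw [Nat.card_congr (validEquiv ι hι), Nat.card_eq_fintype_card,
      Fintype.card_fun, Fintype.card_fin]
    congr 1
    exact (Nat.card_eq_fintype_card).symm
  have hEF : T.card ≤ F := by
    have h1 := Finset.card_le_univ (T.image (aF A))
    rw [Finset.card_image_of_injOn (fun x hx y hy => ha x hx y hy)] at h1
    rw [hF, Nat.card_eq_fintype_card]
    simpa using h1
  have hq0 : (q : ℝ) ≠ 0 := Nat.cast_ne_zero.2 (by omega)
  rw [puzzleProb, cardsub _ _, cardsub _ _, hnum, hden, Nat.cast_pow, Nat.cast_pow,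
    show ((q : ℝ) ^ (F - T.card) : ℝ) = (q : ℝ) ^ ((F : ℤ) - T.card) from by
      rw [← zpow_natCast, Nat.cast_sub hEF],
    show ((q : ℝ) ^ F : ℝ) = (q : ℝ) ^ (F : ℤ) from (zpow_natCast _ _).symm,
    ← zpow_sub₀ hq0]
  congr 1
  ring
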